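/- Let h : ℕ → ℕ satisfy h(n) ≥ 1 for all n, limsup_n h(n) = ∞, and h(a+b) ≥ h(a)·h(b) for all a, b ∈ ℕ. Then fE(h) ⊆ fN(h). -/

import Mathlib

open Filter Set

/-- The basic clopen set `[σ]` in the Baire space determined by a finite sequence `σ`. -/
def cylinder (σ : List ℕ) : Set (ℕ → ℕ) :=
  {x | ∀ i : Fin σ.length, x i = σ.get i}

/-- `limsup_n h(n) = ∞`, i.e. `h` takes arbitrarily large values frequently. -/
def LimsupInfty (h : ℕ → ℕ) : Prop :=
  ∀ m : ℕ, ∃ᶠ n in Filter.atTop, m ≤ h n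

/-- The family `fN(h)` of fake null sets: `F ∈ fN(h)` iff for every `ε > 0` there is a
sequence of finite sequences `σ_n` with `∑ 1/h(|σ_n|) < ε` covering `F`. -/
def fN (h : ℕ → ℕ) (F : Set (ℕ → ℕ)) : Prop :=
  ∀ ε : ℝ, 0 < ε →
    ∃ σ : ℕ → List ℕ,
      Summable (fun n => (1 : ℝ) / (h (σ n).length : ℝ)) ∧
      (∑' n, (1 : ℝ) / (h (σ n).length : ℝ)) < ε ∧
      F ⊆ ⋃ n, cylinder (σ n)

/-- The restriction of `x` to the interval `[l, u)`, extended by `0` elsewhere. -/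
def restrIco (x : ℕ → ℕ) (l u : ℕ) : ℕ → ℕ :=
  fun i => if l ≤ i ∧ i < u then x i else 0

/-- `J` is a set of patterns on the interval `[l, u)`: every element vanishes off `[l, u)`. -/
def SuppIco (l u : ℕ) (J : Set (ℕ → ℕ)) : Prop :=
  ∀ σ ∈ J, ∀ i, ¬ (l ≤ i ∧ i < u) → σ i = 0

/-- The family `fE(h)`: partition `ℕ` into consecutive nonempty intervals `I_n = [a n, a (n+1))`
(`a 0 = 0`, `a` strictly increasing), patterns `J_n ⊆ ω^{I_n}` with `∑ |J_n|/h(|I_n|) < ∞`,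
and `F ⊆ {x : x↾I_n ∈ J_n for all but finitely many n}`. -/
def fE (h : ℕ → ℕ) (F : Set (ℕ → ℕ)) : Prop :=
  ∃ a : ℕ → ℕ, a 0 = 0 ∧ StrictMono a ∧
    ∃ J : ℕ → Set (ℕ → ℕ),
      (∀ n, SuppIco (a n) (a (n+1)) (J n)) ∧
      (∀ n, (J n).Finite) ∧
      Summable (fun n => ((J n).ncard : ℝ) / (h (a (n+1) - a n) : ℝ)) ∧
      F ⊆ {x | ∀ᶠ n in Filter.atTop, restrIco x (a n) (a (n+1)) ∈ J n}

/-- The family `fS(h)` of fake small sets: as `fE(h)` but with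
`x↾I_n ∈ J_n` for infinitely many `n`. -/
def fS (h : ℕ → ℕ) (F : Set (ℕ → ℕ)) : Prop :=
  ∃ a : ℕ → ℕ, a 0 = 0 ∧ StrictMono a ∧
    ∃ J : ℕ → Set (ℕ → ℕ),
      (∀ n, SuppIco (a n) (a (n+1)) (J n)) ∧
      (∀ n, (J n).Finite) ∧
      Summable (fun n => ((J n).ncard : ℝ) / (h (a (n+1) - a n) : ℝ)) ∧
      F ⊆ {x | ∃ᶠ n in Filter.atTop, restrIco x (a n) (a (n+1)) ∈ J n}

/-- The family `fE(Fin)`: as `fE(h)` but one only requires each pattern set `J_n` to be finite. -/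
def fEFin (F : Set (ℕ → ℕ)) : Prop :=
  ∃ a : ℕ → ℕ, a 0 = 0 ∧ StrictMono a ∧
    ∃ J : ℕ → Set (ℕ → ℕ),
      (∀ n, SuppIco (a n) (a (n+1)) (J n)) ∧
      (∀ n, (J n).Finite) ∧
      F ⊆ {x | ∀ᶠ n in Filter.atTop, restrIco x (a n) (a (n+1)) ∈ J n}

/-- The family `fS(Fin)`: as `fS(h)` but one only requires each pattern set `J_n` to be finite. -/
def fSFin (F : Set (ℕ → ℕ)) : Prop :=
  ∃ a : ℕ → ℕ, a 0 = 0 ∧ StrictMono a ∧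
    ∃ J : ℕ → Set (ℕ → ℕ),
      (∀ n, SuppIco (a n) (a (n+1)) (J n)) ∧
      (∀ n, (J n).Finite) ∧
      F ⊆ {x | ∃ᶠ n in Filter.atTop, restrIco x (a n) (a (n+1)) ∈ J n}

/-- The family `fN(Fin)`: there are finite `S_n ⊆ ω^n` with
`F ⊆ {x : x↾n ∈ S_n for infinitely many n}`. -/
def fNFin (F : Set (ℕ → ℕ)) : Prop :=
  ∃ S : (n : ℕ) → Set (Fin n → ℕ),
    (∀ n, (S n).Finite) ∧
    F ⊆ {x | ∃ᶠ n in Filter.atTop, (fun i : Fin n => x i) ∈ S n}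

/-- The σ-ideal `M_-`: there are `x_F ∈ ω^ω` and a partition of `ℕ` into consecutive nonempty
intervals `I_n = [a n, a (n+1))` with `F ⊆ {x : x↾I_n ≠ x_F↾I_n for all but finitely many n}`. -/
def Mminus (F : Set (ℕ → ℕ)) : Prop :=
  ∃ xF : ℕ → ℕ, ∃ a : ℕ → ℕ, a 0 = 0 ∧ StrictMono a ∧
    F ⊆ {x | ∀ᶠ n in Filter.atTop, ∃ i, a n ≤ i ∧ i < a (n+1) ∧ x i ≠ xF i}

open scoped ENNReal NNReal

section Aux
variable (J : ℕ → Set (ℕ → ℕ)) (hfin : ∀ n, (J n).Finite)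

noncomputable def patFinset (N r : ℕ) : Finset (Fin r → (ℕ → ℕ)) :=
  Fintype.piFinset fun t => (hfin (N + t.1)).toFinset

lemma card_patFinset (N r : ℕ) :
    (patFinset J hfin N r).card = ∏ t : Fin r, (J (N + t.1)).ncard := by
  rw [patFinset, Fintype.card_piFinset]
  exact Finset.prod_congr rfl fun t _ => (Set.ncard_eq_toFinset_card _ (hfin _)).symm

def cylOf (a : ℕ → ℕ) (N r : ℕ) (τ : List ℕ) (q : Fin r → ℕ → ℕ) : List ℕ :=
  τ ++ List.ofFn (fun i : Fin (a (N + r) - a N) => ∑ t : Fin r, q t (a N + i.1))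

lemma length_cylOf (a : ℕ → ℕ) (amono : Monotone a) (N r : ℕ) (τ : List ℕ)
    (hτ : τ.length = a N) (q : Fin r → ℕ → ℕ) :
    (cylOf a N r τ q).length = a (N + r) := by
  have : a N ≤ a (N + r) := amono (Nat.le_add_right N r)
  simp [cylOf, hτ]
  omega

noncomputable def cylList (a : ℕ → ℕ) (N r : ℕ) (τ : List ℕ) : List (List ℕ) :=
  if τ.length = a N then ((patFinset J hfin N r).toList).map (cylOf a N r τ) else []

lemma length_cylList_le (a : ℕ → ℕ) (N r : ℕ) (τ : List ℕ) :
    (cylList J hfin a N r τ).length ≤ (patFinset J hfin N r).card := by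
  rw [cylList]
  split
  · simp
  · simp

lemma length_of_mem_cylList (a : ℕ → ℕ) (amono : Monotone a) (N r : ℕ) (τ : List ℕ)
    {L : List ℕ} (hL : L ∈ cylList J hfin a N r τ) : L.length = a (N + r) := by
  rw [cylList] at hL
  split at hL
  · obtain ⟨q, _, rfl⟩ := List.mem_map.mp hL
    exact length_cylOf a amono N r τ ‹_› q
  · simp at hL

end Aux

section Aux2
variable (J : ℕ → Set (ℕ → ℕ)) (hfin : ∀ n, (J n).Finite)

noncomputable def sigmaFun (a : ℕ → ℕ) (N₀ K : ℕ) (Len : ℕ → ℕ) (p i : ℕ) : List ℕ :=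
  (cylList J hfin a (N₀ + (Nat.unpair p).1) (p + K)
      (Denumerable.ofNat (List ℕ) (Nat.unpair p).2)).getD i
    (List.replicate (Len (Nat.pair p i)) 0)

lemma sigmaFun_length_of_lt (a : ℕ → ℕ) (amono : Monotone a) (N₀ K : ℕ) (Len : ℕ → ℕ)
    {p i : ℕ}
    (hi : i < (cylList J hfin a (N₀ + (Nat.unpair p).1) (p + K)
      (Denumerable.ofNat (List ℕ) (Nat.unpair p).2)).length) :
    (sigmaFun J hfin a N₀ K Len p i).length = a (N₀ + (Nat.unpair p).1 + (p + K)) := by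
  rw [sigmaFun, List.getD_eq_getElem _ _ hi]
  exact length_of_mem_cylList J hfin a amono _ _ _ (List.getElem_mem hi)

lemma sigmaFun_length_of_ge (a : ℕ → ℕ) (N₀ K : ℕ) (Len : ℕ → ℕ) {p i : ℕ}
    (hi : ¬ i < (cylList J hfin a (N₀ + (Nat.unpair p).1) (p + K)
      (Denumerable.ofNat (List ℕ) (Nat.unpair p).2)).length) :
    (sigmaFun J hfin a N₀ K Len p i).length = Len (Nat.pair p i) := by
  rw [sigmaFun, List.getD_eq_default _ _ (by omega)]
  simp

open scoped ENNReal

lemma key_count (h : ℕ → ℕ) (h1 : ∀ n, 1 ≤ h n)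
    (hsm : ∀ a b : ℕ, h a * h b ≤ h (a + b)) (a : ℕ → ℕ) (amono : Monotone a)
    {N₀ : ℕ} (hJ : ∀ n, N₀ ≤ n → 2 * (J n).ncard ≤ h (a (n + 1) - a n)) {N : ℕ}
    (hN : N₀ ≤ N) :
    ∀ r, ((patFinset J hfin N r).card : ℝ≥0∞) * ((h (a (N + r)) : ℝ≥0∞))⁻¹ ≤ 2⁻¹ ^ r := by
  intro r
  induction r with
  | zero =>
    rw [card_patFinset]
    simp only [Finset.univ_eq_empty, Finset.prod_empty, pow_zero]
    rw [Nat.cast_one, one_mul]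
    exact ENNReal.inv_le_one.mpr (by exact_mod_cast h1 _)
  | succ r ih =>
    set d := a (N + r + 1) - a (N + r) with hd_def
    have hd : h (a (N + r)) * h d ≤ h (a (N + r + 1)) := by
      have := hsm (a (N + r)) d
      rwa [Nat.add_sub_cancel' (amono (by omega))] at this
    have hdne : ((h d : ℝ≥0∞)) ≠ 0 :=
      Nat.cast_ne_zero.mpr (Nat.one_le_iff_ne_zero.mp (h1 d))
    have hdnt : ((h d : ℝ≥0∞)) ≠ ⊤ := ENNReal.natCast_ne_top _
    have hcard : ((patFinset J hfin N (r + 1)).card : ℝ≥0∞) =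
        ((patFinset J hfin N r).card : ℝ≥0∞) * ((J (N + r)).ncard : ℝ≥0∞) := by
      rw [card_patFinset, card_patFinset, Fin.prod_univ_castSucc]
      push_cast
      rfl
    have hinv : ((h (a (N + (r + 1))) : ℝ≥0∞))⁻¹ ≤
        ((h (a (N + r)) : ℝ≥0∞))⁻¹ * ((h d : ℝ≥0∞))⁻¹ := by
      rw [← ENNReal.mul_inv (a := (h (a (N + r)) : ℝ≥0∞)) (b := (h d : ℝ≥0∞))
        (Or.inl (Nat.cast_ne_zero.mpr (Nat.one_le_iff_ne_zero.mp (h1 _))))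
        (Or.inl (ENNReal.natCast_ne_top _))]
      apply ENNReal.inv_le_inv.mpr
      have : N + (r + 1) = N + r + 1 := by omega
      rw [this]
      exact_mod_cast hd
    have hhalf : ((J (N + r)).ncard : ℝ≥0∞) * ((h d : ℝ≥0∞))⁻¹ ≤ 2⁻¹ := by
      have h2 : ((J (N + r)).ncard : ℝ≥0∞) ≤ 2⁻¹ * (h d : ℝ≥0∞) := by
        have h2' : (2 * (J (N + r)).ncard : ℝ≥0∞) ≤ (h d : ℝ≥0∞) := by
          exact_mod_cast hJ (N + r) (by omega)
        calc ((J (N + r)).ncard : ℝ≥0∞) = 2⁻¹ * (2 * ((J (N + r)).ncard : ℝ≥0∞)) := by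
              rw [← mul_assoc, ENNReal.inv_mul_cancel two_ne_zero ENNReal.ofNat_ne_top, one_mul]
          _ ≤ 2⁻¹ * (h d : ℝ≥0∞) := by
              apply mul_le_mul_right
              exact_mod_cast h2'
      calc ((J (N + r)).ncard : ℝ≥0∞) * ((h d : ℝ≥0∞))⁻¹
          ≤ (2⁻¹ * (h d : ℝ≥0∞)) * ((h d : ℝ≥0∞))⁻¹ := mul_le_mul_left h2 _
        _ = 2⁻¹ := by rw [mul_assoc, ENNReal.mul_inv_cancel hdne hdnt, mul_one]
    calc ((patFinset J hfin N (r + 1)).card : ℝ≥0∞) * ((h (a (N + (r + 1))) : ℝ≥0∞))⁻¹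
        ≤ (((patFinset J hfin N r).card : ℝ≥0∞) * ((J (N + r)).ncard : ℝ≥0∞)) *
            (((h (a (N + r)) : ℝ≥0∞))⁻¹ * ((h d : ℝ≥0∞))⁻¹) := by
          rw [hcard]; exact mul_le_mul_right hinv _
      _ = (((patFinset J hfin N r).card : ℝ≥0∞) * ((h (a (N + r)) : ℝ≥0∞))⁻¹) *
            (((J (N + r)).ncard : ℝ≥0∞) * ((h d : ℝ≥0∞))⁻¹) := by ring
      _ ≤ 2⁻¹ ^ r * 2⁻¹ := mul_le_mul' ih hhalf
      _ = 2⁻¹ ^ (r + 1) := (pow_succ _ _).symm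

end Aux2

section Cover
variable (J : ℕ → Set (ℕ → ℕ)) (hfin : ∀ n, (J n).Finite)

lemma exists_block (a : ℕ → ℕ) (amono : Monotone a) :
    ∀ (r : ℕ) {N j : ℕ}, a N ≤ j → j < a (N + r) →
      ∃ t, t < r ∧ a (N + t) ≤ j ∧ j < a (N + t + 1) := by
  intro r
  induction r with
  | zero => intro N j h1 h2; rw [Nat.add_zero] at h2; omega
  | succ r ih =>
    intro N j h1 h2
    by_cases hc : a (N + r) ≤ j
    · exact ⟨r, by omega, hc, by have : N + r + 1 = N + (r + 1) := by omega
                                 rw [this]; exact h2⟩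
    · obtain ⟨t, ht, h3, h4⟩ := ih h1 (by omega)
      exact ⟨t, by omega, h3, h4⟩

lemma mem_cyl (a : ℕ → ℕ) (amono : StrictMono a) (N r : ℕ) (x : ℕ → ℕ) :
    x ∈ cylinder (cylOf a N r (List.ofFn fun i : Fin (a N) => x i)
      (fun t : Fin r => restrIco x (a (N + t.1)) (a (N + t.1 + 1)))) := by
  have hmono : Monotone a := amono.monotone
  have hτl : (List.ofFn fun i : Fin (a N) => x i).length = a N := by simp
  rintro ⟨i, hi⟩
  rw [List.get_eq_getElem]
  show x i = _
  have hlen : (cylOf a N r (List.ofFn fun i : Fin (a N) => x i)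
      (fun t : Fin r => restrIco x (a (N + t.1)) (a (N + t.1 + 1)))).length
      = a N + (a (N + r) - a N) := by
    simp [cylOf]
  rcases lt_or_ge i (a N) with hia | hia
  · simp only [cylOf]
    rw [List.getElem_append_left (by simpa [hτl] using hia)]
    simp
  · have hi2 : i < a (N + r) := by
      rw [hlen] at hi
      have := hmono (Nat.le_add_right N r)
      omega
    simp only [cylOf]
    rw [List.getElem_append_right (by simpa [hτl] using hia : (List.ofFn fun i : Fin (a N) => x i).length ≤ i)]
    rw [List.getElem_ofFn]
    simp only [hτl]
    have hrw : a N + (i - a N) = i := by omega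
    rw [hrw]
    obtain ⟨t₀, ht₀r, h3, h4⟩ := exists_block a hmono r hia hi2
    rw [Finset.sum_eq_single_of_mem ⟨t₀, ht₀r⟩ (Finset.mem_univ _)]
    · rw [restrIco, if_pos ⟨h3, h4⟩]
    · intro t _ htne
      rw [restrIco, if_neg]
      rintro ⟨h5, h6⟩
      rcases lt_or_gt_of_ne (fun hh : t.1 = t₀ => htne (Fin.ext hh)) with hlt | hgt
      · have : a (N + t.1 + 1) ≤ a (N + t₀) := hmono (by omega)
        omega
      · have : a (N + t₀ + 1) ≤ a (N + t.1) := hmono (by omega)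
        omega

end Cover

theorem stmt10 (h : ℕ → ℕ) (h1 : ∀ n, 1 ≤ h n) (hlim : LimsupInfty h)
    (hsm : ∀ a b : ℕ, h a * h b ≤ h (a + b)) :
    ∀ F : Set (ℕ → ℕ), fE h F → fN h F := by
  classical
  rintro F ⟨a, ha0, amono, J, hsupp, hfin, hsum, hsub⟩ ε hε
  have hmono : Monotone a := amono.monotone
  -- threshold N₀
  obtain ⟨N₀, hN₀⟩ : ∃ N₀, ∀ n, N₀ ≤ n → 2 * (J n).ncard ≤ h (a (n + 1) - a n) := by
    obtain ⟨N₀, hN₀⟩ := Filter.eventually_atTop.mp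
      (hsum.tendsto_atTop_zero.eventually_lt_const (by norm_num : (0:ℝ) < 1/2))
    refine ⟨N₀, fun n hn => ?_⟩
    have hd : (0:ℝ) < (h (a (n+1) - a n) : ℝ) := by exact_mod_cast h1 _
    have := hN₀ n hn
    rw [div_lt_iff₀ hd] at this
    have h2 : (2 * (J n).ncard : ℝ) < (h (a (n+1) - a n) : ℝ) := by push_cast; linarith
    exact_mod_cast h2.le
  -- M
  set M : ℕ := ⌈8/ε⌉₊ + 1 with hM_def
  have hMpos : (0:ℝ) < M := by positivity
  have hMinv : ((M:ℝ))⁻¹ ≤ ε/8 := by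
    have h8 : 8/ε ≤ (M:ℝ) := le_trans (Nat.le_ceil _) (by exact_mod_cast Nat.le_succ _)
    calc (M:ℝ)⁻¹ ≤ (8/ε)⁻¹ := inv_anti₀ (by positivity) h8
      _ = ε/8 := by rw [inv_div]
  -- K
  obtain ⟨K, hK⟩ := exists_pow_lt_of_lt_one (show (0:ℝ) < ε/4 by positivity)
    (by norm_num : (1/2:ℝ) < 1)
  -- Len
  choose Len hLen using fun q : ℕ => (hlim (2 ^ q * M)).exists
  -- abbreviations
  set σ : ℕ → List ℕ :=
    fun n => sigmaFun J hfin a N₀ K Len (Nat.unpair n).1 (Nat.unpair n).2 with hσ_def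
  set g : ℕ → ℕ → ℝ≥0∞ :=
    fun p i => ((h (sigmaFun J hfin a N₀ K Len p i).length : ℝ≥0∞))⁻¹ with hg_def
  set A : ℕ → ℕ → ℝ≥0∞ := fun p i =>
    if i < (cylList J hfin a (N₀ + (Nat.unpair p).1) (p + K)
        (Denumerable.ofNat (List ℕ) (Nat.unpair p).2)).length then
      ((h (a (N₀ + (Nat.unpair p).1 + (p + K))) : ℝ≥0∞))⁻¹ else 0 with hA_def
  set B : ℕ → ℕ → ℝ≥0∞ :=
    fun p i => ((2:ℝ≥0∞) ^ (Nat.pair p i))⁻¹ * ((M:ℝ≥0∞))⁻¹ with hB_def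
  -- pointwise bound
  have hgAB : ∀ p i, g p i ≤ A p i + B p i := by
    intro p i
    by_cases hi : i < (cylList J hfin a (N₀ + (Nat.unpair p).1) (p + K)
        (Denumerable.ofNat (List ℕ) (Nat.unpair p).2)).length
    · rw [hg_def]
      simp only
      rw [sigmaFun_length_of_lt J hfin a hmono N₀ K Len hi, hA_def]
      simp only [if_pos hi]
      exact le_self_add
    · rw [hg_def]
      simp only
      rw [sigmaFun_length_of_ge J hfin a N₀ K Len hi]
      refine le_trans ?_ le_add_self
      rw [hB_def]
      have hle : ((2 ^ (Nat.pair p i) * M : ℕ) : ℝ≥0∞) ≤ (h (Len (Nat.pair p i)) : ℝ≥0∞) := by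
        exact_mod_cast hLen (Nat.pair p i)
    
      calc ((h (Len (Nat.pair p i)) : ℝ≥0∞))⁻¹
          ≤ (((2 ^ (Nat.pair p i) * M : ℕ)) : ℝ≥0∞)⁻¹ := ENNReal.inv_le_inv.mpr hle
        _ = ((2:ℝ≥0∞) ^ (Nat.pair p i))⁻¹ * ((M:ℝ≥0∞))⁻¹ := by
            push_cast
            rw [ENNReal.mul_inv (Or.inl (by positivity)) (Or.inl (by
              exact ENNReal.pow_ne_top ENNReal.ofNat_ne_top))]
  -- column sums of A
  have hA : ∀ p, ∑' i, A p i ≤ (2:ℝ≥0∞)⁻¹ ^ (p + K) := by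
    intro p
    set Lp := (cylList J hfin a (N₀ + (Nat.unpair p).1) (p + K)
        (Denumerable.ofNat (List ℕ) (Nat.unpair p).2)).length with hLp_def
    have hAe : ∑' i, A p i =
        (Lp : ℝ≥0∞) * ((h (a (N₀ + (Nat.unpair p).1 + (p + K))) : ℝ≥0∞))⁻¹ := by
      simp only [hA_def]
      rw [tsum_eq_sum (s := Finset.range Lp)
        (fun b hb => if_neg (by simpa [hLp_def] using hb))]
      rw [Finset.sum_ite_of_true (fun i hi => by simpa [hLp_def] using hi)]
      rw [Finset.sum_const, Finset.card_range, nsmul_eq_mul]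
    rw [hAe]
    calc (Lp : ℝ≥0∞) * ((h (a (N₀ + (Nat.unpair p).1 + (p + K))) : ℝ≥0∞))⁻¹
        ≤ ((patFinset J hfin (N₀ + (Nat.unpair p).1) (p + K)).card : ℝ≥0∞) *
            ((h (a (N₀ + (Nat.unpair p).1 + (p + K))) : ℝ≥0∞))⁻¹ := by
          exact mul_le_mul_left (by exact_mod_cast length_cylList_le J hfin a _ _ _) _
      _ ≤ (2:ℝ≥0∞)⁻¹ ^ (p + K) :=
          key_count J hfin h h1 hsm a hmono hN₀ (Nat.le_add_right _ _) (p + K)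
  -- the main estimate
  have hhalf_ofReal : ((2:ℝ≥0∞))⁻¹ = ENNReal.ofReal (1/2) := by
    rw [one_div, ENNReal.ofReal_inv_of_pos (by norm_num), ENNReal.ofReal_ofNat]
  have hW : ∑' n, ((h (σ n).length : ℝ≥0∞))⁻¹ < ENNReal.ofReal ε := by
    have e1 : ∑' n, ((h (σ n).length : ℝ≥0∞))⁻¹ = ∑' (q : ℕ × ℕ), g q.1 q.2 :=
      calc ∑' n, ((h (σ n).length : ℝ≥0∞))⁻¹
          = ∑' n, g (Nat.unpair n).1 (Nat.unpair n).2 := rfl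
        _ = ∑' (q : ℕ × ℕ),
              g (Nat.unpair (Nat.pairEquiv q)).1 (Nat.unpair (Nat.pairEquiv q)).2 :=
            (Equiv.tsum_eq Nat.pairEquiv _).symm
        _ = ∑' (q : ℕ × ℕ), g q.1 q.2 := tsum_congr fun q => by
            show g (Nat.unpair (Nat.pair q.1 q.2)).1 (Nat.unpair (Nat.pair q.1 q.2)).2 = _
            rw [Nat.unpair_pair]
    have e2 : ∑' (q : ℕ × ℕ), A q.1 q.2 ≤ ENNReal.ofReal (ε/2) := by
      rw [ENNReal.tsum_prod]
      calc ∑' p, ∑' i, A p i ≤ ∑' p, (2:ℝ≥0∞)⁻¹ ^ (p + K) := ENNReal.tsum_le_tsum hA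
        _ = (∑' p, (2:ℝ≥0∞)⁻¹ ^ p) * (2:ℝ≥0∞)⁻¹ ^ K := by
            simp_rw [pow_add]; exact ENNReal.tsum_mul_right
        _ = 2 * (2:ℝ≥0∞)⁻¹ ^ K := by
            rw [ENNReal.tsum_geometric, ENNReal.one_sub_inv_two, inv_inv]
        _ ≤ 2 * ENNReal.ofReal (ε/4) := by
            apply mul_le_mul_right
            rw [hhalf_ofReal, ← ENNReal.ofReal_pow (by norm_num)]
            exact ENNReal.ofReal_le_ofReal hK.le
        _ = ENNReal.ofReal (ε/2) := by
            rw [← ENNReal.ofReal_ofNat 2, ← ENNReal.ofReal_mul (by norm_num)]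
            congr 1; ring
    have e3 : ∑' (q : ℕ × ℕ), B q.1 q.2 ≤ ENNReal.ofReal (ε/4) := by
      have eB : ∑' (q : ℕ × ℕ), B q.1 q.2 = 2 * ((M:ℝ≥0∞))⁻¹ :=
        calc ∑' (q : ℕ × ℕ), B q.1 q.2
            = ∑' (q : ℕ × ℕ),
                ((fun n => ((2:ℝ≥0∞) ^ n)⁻¹ * ((M:ℝ≥0∞))⁻¹) (Nat.pairEquiv q)) := rfl
          _ = ∑' n, ((2:ℝ≥0∞) ^ n)⁻¹ * ((M:ℝ≥0∞))⁻¹ :=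
              Equiv.tsum_eq Nat.pairEquiv (fun n => ((2:ℝ≥0∞) ^ n)⁻¹ * ((M:ℝ≥0∞))⁻¹)
          _ = 2 * ((M:ℝ≥0∞))⁻¹ := by
              simp_rw [ENNReal.inv_pow]
              rw [ENNReal.tsum_mul_right, ENNReal.tsum_geometric,
                ENNReal.one_sub_inv_two, inv_inv]
      rw [eB]
      calc 2 * ((M:ℝ≥0∞))⁻¹ ≤ 2 * ENNReal.ofReal (ε/8) := by
            apply mul_le_mul_right
            rw [← ENNReal.ofReal_natCast M, ← ENNReal.ofReal_inv_of_pos hMpos]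
            exact ENNReal.ofReal_le_ofReal hMinv
        _ = ENNReal.ofReal (ε/4) := by
            rw [← ENNReal.ofReal_ofNat 2, ← ENNReal.ofReal_mul (by norm_num)]
            congr 1; ring
    calc ∑' n, ((h (σ n).length : ℝ≥0∞))⁻¹ = ∑' (q : ℕ × ℕ), g q.1 q.2 := e1
      _ ≤ ∑' (q : ℕ × ℕ), (A q.1 q.2 + B q.1 q.2) :=
          ENNReal.tsum_le_tsum fun q => hgAB q.1 q.2
      _ = ∑' (q : ℕ × ℕ), A q.1 q.2 + ∑' (q : ℕ × ℕ), B q.1 q.2 := ENNReal.tsum_add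
      _ ≤ ENNReal.ofReal (ε/2) + ENNReal.ofReal (ε/4) := add_le_add e2 e3
      _ = ENNReal.ofReal (ε/2 + ε/4) := (ENNReal.ofReal_add (by positivity) (by positivity)).symm
      _ < ENNReal.ofReal ε := (ENNReal.ofReal_lt_ofReal_iff hε).mpr (by linarith)
  -- convert to real
  set W : ℕ → ℝ≥0 := fun n => ((h (σ n).length : ℝ≥0))⁻¹ with hW_def
  have hcoe : ∀ n, ((W n : ℝ≥0) : ℝ≥0∞) = ((h (σ n).length : ℝ≥0∞))⁻¹ := by
    intro n
    rw [hW_def]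
    simp only
    rw [ENNReal.coe_inv (Nat.cast_ne_zero.mpr (Nat.one_le_iff_ne_zero.mp (h1 _)))]
    norm_cast
  have hWenn : ∑' n, ((W n : ℝ≥0) : ℝ≥0∞) < ENNReal.ofReal ε := by
    rw [tsum_congr hcoe]; exact hW
  have hsumW : Summable W :=
    ENNReal.tsum_coe_ne_top_iff_summable.mp (hWenn.trans ENNReal.ofReal_lt_top).ne
  have hfeq : (fun n => (1:ℝ)/(h (σ n).length : ℝ)) = fun n => ((W n : ℝ)) := by
    funext n
    rw [hW_def, one_div]
    push_cast
    rfl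
  refine ⟨σ, ?_, ?_, ?_⟩
  · rw [hfeq]; exact NNReal.summable_coe.mpr hsumW
  · rw [hfeq, ← NNReal.coe_tsum]
    have := (ENNReal.lt_ofReal_iff_toReal_lt (a := ↑(∑' n, W n)) ENNReal.coe_ne_top).mp
      (by rw [ENNReal.coe_tsum hsumW]; exact hWenn)
    simpa using this
  · -- coverage
    intro x hx
    obtain ⟨N', hN'⟩ := Filter.eventually_atTop.mp (hsub hx)
    set N : ℕ := N₀ + N' with hN_def
    set τ : List ℕ := List.ofFn fun i : Fin (a N) => x i with hτ_def
    set p : ℕ := Nat.pair N' (Encodable.encode τ) with hp_def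
    set r : ℕ := p + K with hr_def
    set q : Fin r → ℕ → ℕ :=
      fun t => restrIco x (a (N + t.1)) (a (N + t.1 + 1)) with hq_def
    have hqmem : q ∈ patFinset J hfin N r := by
      rw [patFinset, Fintype.mem_piFinset]
      intro t
      exact (hfin _).mem_toFinset.mpr (hN' _ (by omega))
    have hcylmem : cylOf a N r τ q ∈ cylList J hfin a N r τ := by
      rw [cylList, if_pos (by rw [hτ_def]; simp)]
      exact List.mem_map_of_mem (Finset.mem_toList.mpr hqmem)
    obtain ⟨i, hilt, hieq⟩ := List.getElem_of_mem hcylmem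
    refine Set.mem_iUnion.mpr ⟨Nat.pair p i, ?_⟩
    have hσeq : σ (Nat.pair p i) = cylOf a N r τ q := by
      rw [hσ_def]
      simp only [Nat.unpair_pair]
      rw [sigmaFun]
      simp only [Nat.unpair_pair, hp_def]
      simp only [Nat.unpair_pair, Denumerable.ofNat_encode]
      rw [← hp_def, ← hN_def, ← hr_def]
      rw [List.getD_eq_getElem _ _ hilt, hieq]
    rw [hσeq]
    exact mem_cyl a amono N r x
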